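/- arXiv:1801.01353 — 3 statements merged into one kernel-verified Lean document; each statement's English description precedes it below -/
import Mathlib

section
/- Let E be a standard Borel measurable space and, for r ∈ [0,1] and a probability measure μ on E, let B(r, μ) = (1 − r)·δ_none + r·(μ ∘ Option.some⁻¹) on Option E. Let w_h ≥ 0 with Σ_h w_h = 1 (h ranging over a finite index set), r_h ∈ [0,1], and probability measures μ_h on E be given; set r̄ = Σ_h w_h r_h, assume 0 < r̄ < 1, and let m = r̄⁻¹ · Σ_h w_h r_h μ_h. Let F be a nonempty family of probability measures on E and suppose ν̂ ∈ F attains the infimum of ν ↦ D_KL(m ‖ ν) over F. Then for every s ∈ (0,1) and every ν ∈ F, D_KL(B(r̄, m) ‖ B(s, ν)) ≥ D_KL(B(r̄, m) ‖ B(r̄, ν̂)). That is, the Bernoulli approximation minimizing the KL divergence from the Bernoulli mixture has existence probability equal to the weighted average Σ_h w_h r_h of the mixture's existence probabilities, and existence-conditioned distribution equal to the KL projection of the normalized mixture m onto F. -/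
open MeasureTheory
open scoped ENNReal
open Classical

/-- Kullback–Leibler divergence between two measures, with values in `[0, ∞]`:
`∫ log(dp/dq) dp` if `p ≪ q`, and `+∞` otherwise. -/
noncomputable def klDiv {α : Type*} [MeasurableSpace α] (p q : Measure α) : ℝ≥0∞ :=
  if p ≪ q then ENNReal.ofReal (∫ x, Real.log (p.rnDeriv q x).toReal ∂p) else ⊤

/-- The σ-algebra on `Option α`: a set is measurable iff its preimage under `some` is. -/
instance {α : Type*} [m : MeasurableSpace α] : MeasurableSpace (Option α) := m.map Option.some

/-- The Bernoulli option measure `B(r, μ) = (1 − r)·δ_none + r·(μ ∘ some⁻¹)`, modeling a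
Bernoulli random finite set with existence probability `r` and state distribution `μ`. -/
noncomputable def bernoulliRFS {E : Type*} [MeasurableSpace E] (r : ℝ) (μ : Measure E) :
    Measure (Option E) :=
  ENNReal.ofReal (1 - r) • Measure.dirac (none : Option E) +
    ENNReal.ofReal r • μ.map Option.some

section Helpers
variable {E : Type*} [MeasurableSpace E]

lemma measurableSet_option_iff {S : Set (Option E)} :
    MeasurableSet S ↔ MeasurableSet (Option.some ⁻¹' S) := Iff.rfl

lemma measurable_some' : Measurable (Option.some : E → Option E) := fun _ hs => hs

lemma measurable_of_comp_some {β : Type*} [MeasurableSpace β] {f : Option E → β}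
    (hf : Measurable fun x => f (some x)) : Measurable f := fun _ hs => hf hs

lemma bernoulliRFS_apply (r : ℝ) (μ : Measure E) {S : Set (Option E)} (hS : MeasurableSet S) :
    bernoulliRFS r μ S = ENNReal.ofReal (1 - r) * (Measure.dirac (none : Option E)) S
      + ENNReal.ofReal r * μ (Option.some ⁻¹' S) := by
  simp [bernoulliRFS, Measure.map_apply measurable_some' hS]

instance (r : ℝ) (μ : Measure E) [IsFiniteMeasure μ] : IsFiniteMeasure (bernoulliRFS r μ) := by
  constructor
  rw [bernoulliRFS_apply r μ MeasurableSet.univ]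
  exact ENNReal.add_lt_top.2 ⟨ENNReal.mul_lt_top ENNReal.ofReal_lt_top (by simp),
    ENNReal.mul_lt_top ENNReal.ofReal_lt_top (measure_lt_top μ _)⟩

variable {μ ν : Measure E} {r s : ℝ}

lemma ac_of_bernoulli_ac (hr : 0 < r) (h : bernoulliRFS r μ ≪ bernoulliRFS s ν) : μ ≪ ν := by
  refine Measure.AbsolutelyContinuous.mk fun A hA hA0 => ?_
  have hS : MeasurableSet (Option.some '' A) := by
    rw [measurableSet_option_iff, Set.preimage_image_eq _ (Option.some_injective E)]
    exact hA
  have hq : bernoulliRFS s ν (Option.some '' A) = 0 := by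
    rw [bernoulliRFS_apply _ _ hS, Measure.dirac_apply' _ hS,
      Set.preimage_image_eq _ (Option.some_injective E), hA0]
    simp [Set.indicator_apply]
  have hp := h hq
  rw [bernoulliRFS_apply _ _ hS, Measure.dirac_apply' _ hS,
    Set.preimage_image_eq _ (Option.some_injective E)] at hp
  simp only [Set.indicator_apply, show (none : Option E) ∉ Option.some '' A by simp,
    if_false, mul_zero, zero_add] at hp
  rcases mul_eq_zero.mp hp with h' | h'
  · exact absurd h' (by simp [ENNReal.ofReal_eq_zero, not_le, hr])
  · exact h'

lemma bernoulli_ac_of_ac (hs0 : 0 < s) (hs1 : s < 1) (hμν : μ ≪ ν) :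
    bernoulliRFS r μ ≪ bernoulliRFS s ν := by
  refine Measure.AbsolutelyContinuous.mk fun S hS hS0 => ?_
  rw [bernoulliRFS_apply _ _ hS, Measure.dirac_apply' _ hS] at hS0 ⊢
  rcases add_eq_zero.mp hS0 with ⟨h1, h2⟩
  rcases mul_eq_zero.mp h1 with h' | h'
  · exact absurd h' (by simp [ENNReal.ofReal_eq_zero, not_le]; linarith)
  · rcases mul_eq_zero.mp h2 with h'' | h''
    · exact absurd h'' (by simp [ENNReal.ofReal_eq_zero, not_le, hs0])
    · rw [hμν h'', h', mul_zero, mul_zero, add_zero]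

lemma bernoulli_eq_withDensity (hr0 : 0 < r) (hr1 : r < 1) (hs0 : 0 < s) (hs1 : s < 1)
    [SigmaFinite μ] [SigmaFinite ν] (hμν : μ ≪ ν) :
    bernoulliRFS r μ = (bernoulliRFS s ν).withDensity
      (fun o => Option.elim o (ENNReal.ofReal ((1 - r) / (1 - s)))
        (fun x => ENNReal.ofReal (r / s) * μ.rnDeriv ν x)) := by
  have hf : Measurable (fun o => Option.elim o (ENNReal.ofReal ((1 - r) / (1 - s)))
      (fun x => ENNReal.ofReal (r / s) * μ.rnDeriv ν x)) :=
    measurable_of_comp_some ((Measure.measurable_rnDeriv μ ν).const_mul _)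
  ext S hS
  rw [withDensity_apply _ hS, bernoulliRFS_apply _ _ hS, Measure.dirac_apply' _ hS]
  rw [bernoulliRFS, Measure.restrict_add, Measure.restrict_smul, Measure.restrict_smul,
    lintegral_add_measure, lintegral_smul_measure, lintegral_smul_measure,
    Measure.restrict_map measurable_some' hS, lintegral_map hf measurable_some']
  have h2 : ∫⁻ x in Option.some ⁻¹' S, (ENNReal.ofReal (r / s) * μ.rnDeriv ν x) ∂ν
      = ENNReal.ofReal (r / s) * μ (Option.some ⁻¹' S) := by
    rw [lintegral_const_mul _ (Measure.measurable_rnDeriv μ ν),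
      Measure.setLIntegral_rnDeriv hμν]
  have h1 : ∫⁻ o in S, (Option.elim o (ENNReal.ofReal ((1 - r) / (1 - s)))
      (fun x => ENNReal.ofReal (r / s) * μ.rnDeriv ν x)) ∂(Measure.dirac none)
      = S.indicator (fun _ => ENNReal.ofReal ((1 - r) / (1 - s))) none := by
    rw [setLIntegral_dirac' hf hS]
    simp [Set.indicator_apply]
  simp only [Option.elim_some]
  rw [h1, h2]
  have e1 : ENNReal.ofReal (1 - s) * ENNReal.ofReal ((1 - r) / (1 - s)) = ENNReal.ofReal (1 - r) := by
    rw [← ENNReal.ofReal_mul (by linarith)]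
    rw [mul_div_cancel₀ _ (by linarith : (1:ℝ) - s ≠ 0)]
  have e2 : ENNReal.ofReal s * ENNReal.ofReal (r / s) = ENNReal.ofReal r := by
    rw [← ENNReal.ofReal_mul hs0.le, mul_div_cancel₀ _ hs0.ne']
  simp only [Set.indicator_apply, smul_eq_mul]
  rw [← mul_assoc, e2]
  by_cases h : (none : Option E) ∈ S <;> simp [h, e1]

end Helpers

section Value
variable {E : Type*} [MeasurableSpace E] {μ ν : Measure E} {r s : ℝ}

lemma integrable_dirac'' {α : Type*} [MeasurableSpace α] {f : α → ℝ} (hf : Measurable f)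
    (a : α) : Integrable f (Measure.dirac a) := by
  refine ⟨hf.aestronglyMeasurable, ?_⟩
  rw [HasFiniteIntegral, lintegral_dirac' a hf.enorm]
  exact ENNReal.coe_lt_top

lemma bernoulli_rnDeriv_ae (hr0 : 0 < r) (hr1 : r < 1) (hs0 : 0 < s) (hs1 : s < 1)
    [SigmaFinite μ] [IsFiniteMeasure ν] (hμν : μ ≪ ν) :
    (fun o => Option.elim o (ENNReal.ofReal ((1 - r) / (1 - s)))
        (fun x => ENNReal.ofReal (r / s) * μ.rnDeriv ν x))
      =ᵐ[bernoulliRFS s ν] (bernoulliRFS r μ).rnDeriv (bernoulliRFS s ν) := by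
  refine Measure.eq_rnDeriv ?_ Measure.MutuallySingular.zero_left ?_
  · exact measurable_of_comp_some ((Measure.measurable_rnDeriv μ ν).const_mul _)
  · rw [zero_add]; exact bernoulli_eq_withDensity hr0 hr1 hs0 hs1 hμν

/-- The key value computation. -/
lemma integral_log_rnDeriv_bernoulli (hr0 : 0 < r) (hr1 : r < 1) (hs0 : 0 < s) (hs1 : s < 1)
    [IsProbabilityMeasure μ] [IsProbabilityMeasure ν] (hμν : μ ≪ ν) :
    (∫ o, Real.log (((bernoulliRFS r μ).rnDeriv (bernoulliRFS s ν)) o).toReal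
        ∂(bernoulliRFS r μ))
      = if Integrable (fun x => Real.log (μ.rnDeriv ν x).toReal) μ
        then (1 - r) * Real.log ((1 - r) / (1 - s)) + r * Real.log (r / s)
          + r * ∫ x, Real.log (μ.rnDeriv ν x).toReal ∂μ
        else 0 := by
  set f : Option E → ℝ≥0∞ := fun o => Option.elim o (ENNReal.ofReal ((1 - r) / (1 - s)))
      (fun x => ENNReal.ofReal (r / s) * μ.rnDeriv ν x) with hfdef
  have hf : Measurable f :=
    measurable_of_comp_some ((Measure.measurable_rnDeriv μ ν).const_mul _)
  have hpq : bernoulliRFS r μ ≪ bernoulliRFS s ν := bernoulli_ac_of_ac hs0 hs1 hμν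
  have hae : (fun o => Real.log ((f o).toReal))
      =ᵐ[bernoulliRFS r μ] (fun o => Real.log (((bernoulliRFS r μ).rnDeriv (bernoulliRFS s ν)) o).toReal) := by
    filter_upwards [hpq.ae_le (bernoulli_rnDeriv_ae hr0 hr1 hs0 hs1 hμν)] with o ho
    exact congrArg (fun t : ℝ≥0∞ => Real.log t.toReal) ho
  set φ : Option E → ℝ := fun o => Real.log ((f o).toReal) with hφdef
  have hφm : Measurable φ := (Real.measurable_log.comp hf.ennreal_toReal)
  -- a.e. identification of φ ∘ some under μ
  have haeg : (fun x => φ (some x)) =ᵐ[μ] (fun x => Real.log (μ.rnDeriv ν x).toReal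
      + Real.log (r / s)) := by
    filter_upwards [Measure.rnDeriv_pos hμν, hμν.ae_le (Measure.rnDeriv_lt_top μ ν)]
      with x hpos hlt
    have h1 : ((ENNReal.ofReal (r / s)) * μ.rnDeriv ν x).toReal
        = (r / s) * (μ.rnDeriv ν x).toReal := by
      rw [ENNReal.toReal_mul, ENNReal.toReal_ofReal (by positivity)]
    show Real.log (((ENNReal.ofReal (r / s)) * μ.rnDeriv ν x).toReal) = _
    rw [h1, Real.log_mul (by positivity)
      (ENNReal.toReal_ne_zero.mpr ⟨hpos.ne', hlt.ne⟩), add_comm]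
  have hint_iff : Integrable (fun x => φ (some x)) μ ↔
      Integrable (fun x => Real.log (μ.rnDeriv ν x).toReal) μ := by
    constructor
    · intro h
      exact integrable_add_const_iff.mp (h.congr haeg)
    · intro h
      exact (integrable_add_const_iff.mpr h).congr haeg.symm
  rw [← integral_congr_ae hae]
  by_cases hg : Integrable (fun x => Real.log (μ.rnDeriv ν x).toReal) μ
  · rw [if_pos hg]
    have hi1 : Integrable φ (ENNReal.ofReal (1 - r) • Measure.dirac (none : Option E)) :=
      (integrable_dirac'' hφm none).smul_measure ENNReal.ofReal_ne_top
    have hi2 : Integrable φ (ENNReal.ofReal r • μ.map Option.some) := by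
      refine Integrable.smul_measure ?_ ENNReal.ofReal_ne_top
      rw [integrable_map_measure hφm.aestronglyMeasurable measurable_some'.aemeasurable]
      exact hint_iff.mpr hg
    rw [show bernoulliRFS r μ = ENNReal.ofReal (1 - r) • Measure.dirac (none : Option E)
        + ENNReal.ofReal r • μ.map Option.some from rfl]
    rw [integral_add_measure hi1 hi2, integral_smul_measure, integral_smul_measure,
      integral_dirac' _ _ hφm.stronglyMeasurable,
      integral_map measurable_some'.aemeasurable hφm.aestronglyMeasurable]
    rw [integral_congr_ae haeg, integral_add hg (integrable_const _), integral_const]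
    have hφnone : φ none = Real.log ((1 - r) / (1 - s)) := by
      show Real.log ((ENNReal.ofReal ((1 - r) / (1 - s))).toReal) = _
      rw [ENNReal.toReal_ofReal (div_nonneg (by linarith) (by linarith))]
    rw [hφnone, ENNReal.toReal_ofReal (by linarith), ENNReal.toReal_ofReal hr0.le]
    simp only [measure_univ, probReal_univ, ENNReal.toReal_one, one_smul, smul_eq_mul]
    ring
  · rw [if_neg hg]
    apply integral_undef
    intro h
    rw [show bernoulliRFS r μ = ENNReal.ofReal (1 - r) • Measure.dirac (none : Option E)
        + ENNReal.ofReal r • μ.map Option.some from rfl] at h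
    have h2 := (integrable_add_measure.mp h).2
    rw [integrable_smul_measure (by simp [ENNReal.ofReal_eq_zero]; linarith)
      ENNReal.ofReal_ne_top] at h2
    rw [integrable_map_measure hφm.aestronglyMeasurable measurable_some'.aemeasurable] at h2
    exact hg (hint_iff.mp h2)

lemma klDiv_bernoulli (hr0 : 0 < r) (hr1 : r < 1) (hs0 : 0 < s) (hs1 : s < 1)
    [IsProbabilityMeasure μ] [IsProbabilityMeasure ν] (hμν : μ ≪ ν) :
    klDiv (bernoulliRFS r μ) (bernoulliRFS s ν)
      = if Integrable (fun x => Real.log (μ.rnDeriv ν x).toReal) μ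
        then ENNReal.ofReal ((1 - r) * Real.log ((1 - r) / (1 - s)) + r * Real.log (r / s)
          + r * ∫ x, Real.log (μ.rnDeriv ν x).toReal ∂μ)
        else 0 := by
  rw [klDiv, if_pos (bernoulli_ac_of_ac hs0 hs1 hμν),
    integral_log_rnDeriv_bernoulli hr0 hr1 hs0 hs1 hμν]
  split_ifs with h
  · rfl
  · simp

lemma gibbs_binary (hr0 : 0 < r) (hr1 : r < 1) (hs0 : 0 < s) (hs1 : s < 1) :
    0 ≤ (1 - r) * Real.log ((1 - r) / (1 - s)) + r * Real.log (r / s) := by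
  have h1 : Real.log ((1 - s) / (1 - r)) ≤ (1 - s) / (1 - r) - 1 :=
    Real.log_le_sub_one_of_pos (by apply div_pos <;> linarith)
  have h2 : Real.log (s / r) ≤ s / r - 1 :=
    Real.log_le_sub_one_of_pos (by apply div_pos <;> linarith)
  have c1 : (1 - r) * ((1 - s) / (1 - r)) = 1 - s := by
    rw [mul_comm]; exact div_mul_cancel₀ _ (by linarith : (1:ℝ) - r ≠ 0)
  have c2 : r * (s / r) = s := by
    rw [mul_comm]; exact div_mul_cancel₀ _ hr0.ne'
  have a1 : (1 - r) * Real.log ((1 - s) / (1 - r)) ≤ (1 - s) - (1 - r) := by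
    have h := mul_le_mul_of_nonneg_left h1 (by linarith : (0:ℝ) ≤ 1 - r)
    rw [mul_sub, mul_one, c1] at h
    linarith
  have a2 : r * Real.log (s / r) ≤ s - r := by
    have h := mul_le_mul_of_nonneg_left h2 hr0.le
    rw [mul_sub, mul_one, c2] at h
    linarith
  have e1 : Real.log ((1 - r) / (1 - s)) = - Real.log ((1 - s) / (1 - r)) := by
    rw [← Real.log_inv, inv_div]
  have e2 : Real.log (r / s) = - Real.log (s / r) := by rw [← Real.log_inv, inv_div]
  rw [e1, e2]; nlinarith [a1, a2]

end Value

/-- The Bernoulli approximation minimizing the KL divergence from the Bernoulli mixture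
`B(r̄, m)`, over existence probabilities `s ∈ (0,1)` and state densities `ν` in a family `F`,
is obtained by taking existence probability `r̄ = Σ_h w_h r_h` and the KL projection `ν̂` of the
normalized mixture `m` onto `F`. -/
theorem bernoulli_mixture_klDiv_min
    {E : Type*} [MeasurableSpace E] [StandardBorelSpace E]
    {H : Type*} [Fintype H] (w : H → ℝ) (hw : ∀ h, 0 ≤ w h) (hw1 : ∑ h, w h = 1)
    (r : H → ℝ) (hr : ∀ h, r h ∈ Set.Icc (0 : ℝ) 1)
    (μ : H → Measure E) [∀ h, IsProbabilityMeasure (μ h)]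
    (rbar : ℝ) (hrbar : rbar = ∑ h, w h * r h) (h0 : 0 < rbar) (h1 : rbar < 1)
    (m : Measure E)
    (hm : m = (ENNReal.ofReal rbar)⁻¹ • ∑ h, ENNReal.ofReal (w h * r h) • μ h)
    (F : Set (Measure E)) (hF : F.Nonempty) (hFP : ∀ ν ∈ F, IsProbabilityMeasure ν)
    (νhat : Measure E) (hνhatF : νhat ∈ F)
    (hνhat : ∀ ν ∈ F, klDiv m νhat ≤ klDiv m ν) :
    ∀ s ∈ Set.Ioo (0 : ℝ) 1, ∀ ν ∈ F,
      klDiv (bernoulliRFS rbar m) (bernoulliRFS s ν) ≥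
        klDiv (bernoulliRFS rbar m) (bernoulliRFS rbar νhat) := by
  have hne : ENNReal.ofReal rbar ≠ 0 := by
    simp only [ne_eq, ENNReal.ofReal_eq_zero, not_le]; exact h0
  haveI hPm : IsProbabilityMeasure m := by
    constructor
    rw [hm, Measure.smul_apply, Measure.finset_sum_apply]
    simp only [Measure.smul_apply, measure_univ, smul_eq_mul, mul_one]
    rw [← ENNReal.ofReal_sum_of_nonneg (fun h _ => mul_nonneg (hw h) (hr h).1), ← hrbar]
    exact ENNReal.inv_mul_cancel hne ENNReal.ofReal_ne_top
  intro s hs ν hν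
  haveI hPν := hFP ν hν
  haveI hPνh := hFP νhat hνhatF
  by_cases hac : bernoulliRFS rbar m ≪ bernoulliRFS s ν
  · have hmν : m ≪ ν := ac_of_bernoulli_ac h0 hac
    have hkle := hνhat ν hν
    have hmνh : m ≪ νhat := by
      by_contra hcon
      rw [klDiv, if_neg hcon, klDiv, if_pos hmν, top_le_iff] at hkle
      exact ENNReal.ofReal_ne_top hkle
    rw [klDiv, if_pos hmνh, klDiv, if_pos hmν] at hkle
    rw [ge_iff_le, klDiv_bernoulli h0 h1 hs.1 hs.2 hmν, klDiv_bernoulli h0 h1 h0 h1 hmνh]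
    set Jν := ∫ x, Real.log (m.rnDeriv ν x).toReal ∂m with hJν
    set Jh := ∫ x, Real.log (m.rnDeriv νhat x).toReal ∂m with hJh
    have hsimp : (1 - rbar) * Real.log ((1 - rbar) / (1 - rbar))
        + rbar * Real.log (rbar / rbar) + rbar * Jh = rbar * Jh := by
      rw [div_self (by linarith : (1:ℝ) - rbar ≠ 0), div_self h0.ne', Real.log_one]; ring
    have hL := gibbs_binary h0 h1 hs.1 hs.2
    split_ifs with hIh hIν
    · rw [hsimp]
      by_cases hJh0 : Jh ≤ 0
      · rw [ENNReal.ofReal_eq_zero.mpr (mul_nonpos_of_nonneg_of_nonpos h0.le hJh0)]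
        exact zero_le
      · push_neg at hJh0
        have hJle : Jh ≤ Jν := by
          rcases ENNReal.ofReal_le_ofReal_iff'.mp hkle with h | h
          · exact h
          · linarith
        apply ENNReal.ofReal_le_ofReal
        nlinarith [hL]
    · -- νhat side integrable, ν side not: Jν = 0
      rw [hsimp]
      have hJν0 : Jν = 0 := integral_undef hIν
      rw [hJν0, ENNReal.ofReal_zero, nonpos_iff_eq_zero] at hkle
      have : Jh ≤ 0 := by
        by_contra hc
        push_neg at hc
        rw [ENNReal.ofReal_eq_zero] at hkle
        linarith
      rw [ENNReal.ofReal_eq_zero.mpr (mul_nonpos_of_nonneg_of_nonpos h0.le this)]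
    · exact zero_le
    · exact zero_le
  · rw [ge_iff_le]
    have htop : klDiv (bernoulliRFS rbar m) (bernoulliRFS s ν) = ⊤ := by
      rw [klDiv, if_neg hac]
    rw [htop]
    exact le_top
end

section
/- Let a > 0 and b > 0. Then ∫_0^∞ Gam(x; a, b) · log(x) dx = ψ(a) − log(b), where ψ denotes the digamma function and log the natural logarithm. -/
open MeasureTheory

/-- The digamma function `ψ`, the derivative of `log ∘ Γ` on `(0, ∞)`. -/
noncomputable def digamma (x : ℝ) : ℝ := deriv (fun y => Real.log (Real.Gamma y)) x

/-- The Gamma density with shape `a > 0` and rate `b > 0`: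
`Gam(x; a, b) = (b^a / Γ(a)) x^{a−1} e^{−b x}` for `x > 0`. -/
noncomputable def gammaPdf (a b x : ℝ) : ℝ :=
  b ^ a / Real.Gamma a * x ^ (a - 1) * Real.exp (-b * x)

open Set Filter Asymptotics Topology in
/-- Extended version of `Complex.hasDerivAt_GammaIntegral` also recording convergence. -/
lemma aux_mellin {s : ℂ} (hs : 0 < s.re) :
    MellinConvergent (fun t : ℝ => Real.log t • ((Real.exp (-t) : ℝ) : ℂ)) s ∧
      HasDerivAt (mellin fun x : ℝ => ((Real.exp (-x) : ℝ) : ℂ))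
        (mellin (fun t : ℝ => Real.log t • ((Real.exp (-t) : ℝ) : ℂ)) s) s := by
  refine mellin_hasDerivAt_of_isBigO_rpow (a := s.re + 1) (b := 0) ?_ ?_ (lt_add_one _) ?_ hs
  · refine (Continuous.continuousOn ?_).locallyIntegrableOn measurableSet_Ioi
    exact Complex.continuous_ofReal.comp (Real.continuous_exp.comp continuous_neg)
  · rw [← isBigO_norm_left]
    simp_rw [Complex.norm_real, isBigO_norm_left]
    simpa only [neg_one_mul] using
      (isLittleO_exp_neg_mul_rpow_atTop zero_lt_one _).isBigO
  · simp_rw [neg_zero, Real.rpow_zero]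
    refine isBigO_const_of_tendsto (?_ : Tendsto _ _ (𝓝 (1 : ℂ))) one_ne_zero
    rw [(by simp : (1 : ℂ) = Real.exp (-0))]
    exact (Complex.continuous_ofReal.comp
      (Real.continuous_exp.comp continuous_neg)).continuousWithinAt

open Set in
lemma aux_eq {a : ℝ} {t : ℝ} (ht : t ∈ Ioi (0 : ℝ)) :
    (t : ℂ) ^ ((a : ℂ) - 1) • (Real.log t • ((Real.exp (-t) : ℝ) : ℂ)) =
      ((t ^ (a - 1) * (Real.log t * Real.exp (-t)) : ℝ) : ℂ) := by
  have h : ((a : ℂ) - 1) = ((a - 1 : ℝ) : ℂ) := by push_cast; ring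
  rw [h, ← Complex.ofReal_cpow (le_of_lt ht)]
  simp [Complex.real_smul, smul_eq_mul]

open Set in
lemma aux_integrable {a : ℝ} (ha : 0 < a) :
    IntegrableOn (fun t : ℝ => t ^ (a - 1) * (Real.log t * Real.exp (-t))) (Ioi 0) := by
  have h := (aux_mellin (s := (a : ℂ)) (by simpa using ha)).1
  unfold MellinConvergent at h
  refine (h.re).congr ?_
  filter_upwards [ae_restrict_mem measurableSet_Ioi] with t ht
  rw [aux_eq ht]
  rfl

open Set in
lemma aux_hasDerivAt_Gamma {a : ℝ} (ha : 0 < a) :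
    HasDerivAt Real.Gamma
      (∫ t in Ioi (0 : ℝ), t ^ (a - 1) * (Real.log t * Real.exp (-t))) a := by
  have h := (aux_mellin (s := (a : ℂ)) (by simpa using ha)).2
  rw [← Complex.GammaIntegral_eq_mellin] at h
  have hI : mellin (fun t : ℝ => Real.log t • ((Real.exp (-t) : ℝ) : ℂ)) (a : ℂ) =
      ((∫ t in Ioi (0 : ℝ), t ^ (a - 1) * (Real.log t * Real.exp (-t)) : ℝ) : ℂ) := by
    rw [mellin, setIntegral_congr_fun measurableSet_Ioi fun t ht => aux_eq ht]
    exact integral_ofReal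
  rw [hI] at h
  have h2 := h.real_of_complex
  simp only [Complex.ofReal_re] at h2
  refine h2.congr_of_eventuallyEq ?_
  filter_upwards [Ioi_mem_nhds ha] with x hx
  rw [← Complex.Gamma_eq_integral (by simpa using hx), Complex.Gamma_ofReal,
    Complex.ofReal_re]

/-- The expected logarithm under a Gamma density:
`∫_0^∞ Gam(x; a, b) log(x) dx = ψ(a) − log(b)`. -/
theorem gamma_expected_log (a b : ℝ) (ha : 0 < a) (hb : 0 < b) :
    ∫ x in Set.Ioi (0 : ℝ), gammaPdf a b x * Real.log x = digamma a - Real.log b := by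
  have hΓ : 0 < Real.Gamma a := Real.Gamma_pos_of_pos ha
  set I : ℝ := ∫ t in Set.Ioi (0 : ℝ), t ^ (a - 1) * (Real.log t * Real.exp (-t)) with hI
  have hdig : digamma a = I / Real.Gamma a :=
    (((aux_hasDerivAt_Gamma ha).log hΓ.ne')).deriv
  -- substitution x ↦ b⁻¹ * t
  have hsub : (∫ x in Set.Ioi (0 : ℝ), gammaPdf a b x * Real.log x) =
      b⁻¹ • ∫ t in Set.Ioi (b * 0 : ℝ),
        (b ^ a / Real.Gamma a * (b⁻¹ * t) ^ (a - 1) * Real.exp (-t) * Real.log (b⁻¹ * t)) := by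
    rw [← MeasureTheory.integral_comp_mul_left_Ioi
      (fun t => b ^ a / Real.Gamma a * (b⁻¹ * t) ^ (a - 1) * Real.exp (-t) * Real.log (b⁻¹ * t))
      0 hb]
    refine setIntegral_congr_fun measurableSet_Ioi fun x hx => ?_
    have hbx : b⁻¹ * (b * x) = x := by field_simp
    rw [hbx, gammaPdf]
    ring_nf
  rw [hsub, mul_zero]
  have hpt : ∀ t ∈ Set.Ioi (0 : ℝ),
      b ^ a / Real.Gamma a * (b⁻¹ * t) ^ (a - 1) * Real.exp (-t) * Real.log (b⁻¹ * t) =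
        b * (Real.Gamma a)⁻¹ * (t ^ (a - 1) * (Real.log t * Real.exp (-t))
          - Real.log b * (Real.exp (-t) * t ^ (a - 1))) := by
    intro t ht
    have ht0 : (0 : ℝ) < t := ht
    have h1 : (b⁻¹ * t) ^ (a - 1) = (b ^ (a - 1))⁻¹ * t ^ (a - 1) := by
      rw [Real.mul_rpow (by positivity) ht0.le, Real.inv_rpow hb.le]
    have h2 : Real.log (b⁻¹ * t) = Real.log t - Real.log b := by
      rw [Real.log_mul (by positivity) ht0.ne', Real.log_inv]; ring
    have h3 : b ^ a = b * b ^ (a - 1) := by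
      have h4 := Real.rpow_add hb 1 (a - 1)
      rw [Real.rpow_one] at h4
      rw [← h4]
      ring_nf
    have hbne : (b : ℝ) ^ (a - 1) ≠ 0 := by positivity
    rw [h1, h2, h3]
    field_simp
  rw [setIntegral_congr_fun measurableSet_Ioi hpt]
  have hint1 := aux_integrable ha
  have hint2 : IntegrableOn (fun t : ℝ => Real.log b * (Real.exp (-t) * t ^ (a - 1)))
      (Set.Ioi 0) := (Real.GammaIntegral_convergent ha).const_mul _
  rw [integral_const_mul, integral_sub hint1 hint2, integral_const_mul, ← hI,
    ← Real.Gamma_eq_integral ha]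
  rw [hdig]
  rw [smul_eq_mul]
  field_simp
end

section
/- Let p be a probability measure on (0, ∞) such that L = ∫ log(x) dp(x) and M = ∫ x dp(x) are finite, with M > 0. Define the Gamma cross entropy C(a, b) = −(a·log(b) − log Γ(a) + (a − 1)·L − b·M) for a, b > 0. Suppose a* > 0 and b* > 0 satisfy the moment-matching conditions ψ(a*) − log(b*) = L and a*/b* = M, where ψ is the digamma function. Then for all a, b > 0, C(a, b) ≥ C(a*, b*). That is, matching the expected value and the expected logarithm yields the global minimizer of the cross entropy −∫ log Gam(x; a, b) dp(x) over all Gamma densities. -/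
open MeasureTheory
open scoped ENNReal

lemma gce_lintegral_aux {a b : ℝ} (ha : 0 < a) (hb : 0 < b) :
    ∫⁻ x in Set.Ioi (0:ℝ), ENNReal.ofReal (x ^ (a-1) * Real.exp (-(b*x))) =
      ENNReal.ofReal ((1/b) ^ a * Real.Gamma a) := by
  have hint := Real.integral_rpow_mul_exp_neg_mul_Ioi ha hb
  have hmeas : AEStronglyMeasurable (fun x : ℝ => x ^ (a-1) * Real.exp (-(b*x)))
      (volume.restrict (Set.Ioi 0)) := by
    apply Measurable.aestronglyMeasurable
    exact (measurable_id.pow measurable_const).mul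
      ((measurable_const.mul measurable_id).neg.exp)
  have hnn : 0 ≤ᵐ[volume.restrict (Set.Ioi (0:ℝ))]
      fun x => x ^ (a-1) * Real.exp (-(b*x)) := by
    filter_upwards [self_mem_ae_restrict measurableSet_Ioi] with x hx
    have hx' : (0:ℝ) < x := hx
    positivity
  rw [MeasureTheory.integral_eq_lintegral_of_nonneg_ae hnn hmeas] at hint
  have hpos : 0 < (1/b) ^ a * Real.Gamma a := by
    have := Real.Gamma_pos_of_pos ha
    positivity
  have hne : (∫⁻ x in Set.Ioi (0:ℝ), ENNReal.ofReal (x ^ (a-1) * Real.exp (-(b*x)))) ≠ ⊤ := by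
    intro h
    rw [h] at hint
    simp only [ENNReal.toReal_top] at hint
    linarith
  rw [← hint, ENNReal.ofReal_toReal hne]

/-- Joint convexity (along segments) of `(a, b) ↦ log Γ(a) - a * log b`, via Hölder. -/
lemma gce_combo_le {a₀ b₀ a₁ b₁ t : ℝ} (ha₀ : 0 < a₀) (hb₀ : 0 < b₀)
    (ha₁ : 0 < a₁) (hb₁ : 0 < b₁) (ht₀ : 0 < t) (ht₁ : t < 1) :
    Real.log (Real.Gamma ((1-t)*a₀ + t*a₁)) - ((1-t)*a₀ + t*a₁) * Real.log ((1-t)*b₀ + t*b₁) ≤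
      (1-t) * (Real.log (Real.Gamma a₀) - a₀ * Real.log b₀) +
      t * (Real.log (Real.Gamma a₁) - a₁ * Real.log b₁) := by
  have h1t : 0 < 1 - t := by linarith
  set at' := (1-t)*a₀ + t*a₁ with h_at
  set bt' := (1-t)*b₀ + t*b₁ with h_bt
  have hat : 0 < at' := by positivity
  have hbt : 0 < bt' := by positivity
  have hpq : ((1-t)⁻¹).HolderConjugate t⁻¹ := by
    constructor
    · rw [inv_inv, inv_inv, inv_one]; ring
    · positivity
    · positivity
  have hmeas : ∀ (a b : ℝ),
      Measurable fun x : ℝ => ENNReal.ofReal (x ^ (a-1) * Real.exp (-(b*x))) :=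
    fun a b => ((measurable_id.pow measurable_const).mul
      ((measurable_const.mul measurable_id).neg.exp)).ennreal_ofReal
  set f : ℝ → ℝ≥0∞ := fun x => ENNReal.ofReal (x ^ (a₀-1) * Real.exp (-(b₀*x))) ^ (1-t) with hf_def
  set g : ℝ → ℝ≥0∞ := fun x => ENNReal.ofReal (x ^ (a₁-1) * Real.exp (-(b₁*x))) ^ t with hg_def
  have key := ENNReal.lintegral_mul_le_Lp_mul_Lq (volume.restrict (Set.Ioi 0)) hpq
    (f := f) (g := g)
    ((hmeas a₀ b₀).pow measurable_const).aemeasurable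
    ((hmeas a₁ b₁).pow measurable_const).aemeasurable
  -- identify the left-hand side
  have hLHS : (∫⁻ x in Set.Ioi (0:ℝ), (f * g) x) =
      ENNReal.ofReal ((1/bt') ^ at' * Real.Gamma at') := by
    rw [← gce_lintegral_aux hat hbt]
    refine setLIntegral_congr_fun measurableSet_Ioi (fun x hx => ?_)
    have hx' : (0:ℝ) < x := hx
    have hpos₀ : 0 < x ^ (a₀-1) * Real.exp (-(b₀*x)) := by positivity
    have hpos₁ : 0 < x ^ (a₁-1) * Real.exp (-(b₁*x)) := by positivity
    show f x * g x = _
    rw [hf_def, hg_def]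
    simp only
    rw [ENNReal.ofReal_rpow_of_pos hpos₀, ENNReal.ofReal_rpow_of_pos hpos₁,
      ← ENNReal.ofReal_mul (by positivity)]
    congr 1
    rw [Real.mul_rpow (by positivity) (Real.exp_pos _).le,
        Real.mul_rpow (by positivity) (Real.exp_pos _).le,
        ← Real.rpow_mul hx'.le, ← Real.rpow_mul hx'.le,
        ← Real.exp_mul, ← Real.exp_mul, mul_mul_mul_comm,
        ← Real.rpow_add hx', ← Real.exp_add]
    congr 1
    · congr 1; rw [h_at]; ring
    · rw [h_bt]; ring
  -- identify the right-hand side factors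
  have hfp : (∫⁻ x in Set.Ioi (0:ℝ), f x ^ (1-t)⁻¹) =
      ENNReal.ofReal ((1/b₀) ^ a₀ * Real.Gamma a₀) := by
    rw [← gce_lintegral_aux ha₀ hb₀]
    refine lintegral_congr fun x => ?_
    rw [hf_def]
    simp only
    rw [← ENNReal.rpow_mul, mul_inv_cancel₀ h1t.ne', ENNReal.rpow_one]
  have hgp : (∫⁻ x in Set.Ioi (0:ℝ), g x ^ t⁻¹) =
      ENNReal.ofReal ((1/b₁) ^ a₁ * Real.Gamma a₁) := by
    rw [← gce_lintegral_aux ha₁ hb₁]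
    refine lintegral_congr fun x => ?_
    rw [hg_def]
    simp only
    rw [← ENNReal.rpow_mul, mul_inv_cancel₀ ht₀.ne', ENNReal.rpow_one]
  rw [hLHS, hfp, hgp, one_div ((1-t)⁻¹), one_div (t⁻¹), inv_inv, inv_inv] at key
  set I₀ := (1/b₀) ^ a₀ * Real.Gamma a₀ with hI₀
  set I₁ := (1/b₁) ^ a₁ * Real.Gamma a₁ with hI₁
  set It := (1/bt') ^ at' * Real.Gamma at' with hIt
  have hI₀pos : 0 < I₀ := by
    have := Real.Gamma_pos_of_pos ha₀; positivity
  have hI₁pos : 0 < I₁ := by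
    have := Real.Gamma_pos_of_pos ha₁; positivity
  have hItpos : 0 < It := by
    have := Real.Gamma_pos_of_pos hat; positivity
  rw [ENNReal.ofReal_rpow_of_pos hI₀pos, ENNReal.ofReal_rpow_of_pos hI₁pos,
    ← ENNReal.ofReal_mul (by positivity)] at key
  have key' : It ≤ I₀ ^ (1-t) * I₁ ^ t :=
    (ENNReal.ofReal_le_ofReal_iff (by positivity)).mp key
  have hlog : Real.log It ≤ (1-t) * Real.log I₀ + t * Real.log I₁ := by
    calc Real.log It ≤ Real.log (I₀ ^ (1-t) * I₁ ^ t) := Real.log_le_log hItpos key'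
      _ = (1-t) * Real.log I₀ + t * Real.log I₁ := by
          rw [Real.log_mul (by positivity) (by positivity), Real.log_rpow hI₀pos,
            Real.log_rpow hI₁pos]
  have hIlog : ∀ (a b : ℝ), 0 < a → 0 < b →
      Real.log ((1/b) ^ a * Real.Gamma a) = Real.log (Real.Gamma a) - a * Real.log b := by
    intro a b ha hb
    rw [Real.log_mul (by positivity) (Real.Gamma_pos_of_pos ha).ne',
      Real.log_rpow (by positivity), one_div, Real.log_inv]
    ring
  rw [hIt, hI₀, hI₁, hIlog _ _ hat hbt, hIlog _ _ ha₀ hb₀, hIlog _ _ ha₁ hb₁] at hlog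
  linarith

/-- For a probability measure `p` supported on `(0, ∞)` with finite log-moment `L` and finite
mean `M > 0`, the Gamma cross entropy `C(a, b) = −(a log b − log Γ(a) + (a − 1) L − b M)` is
globally minimized over `a, b > 0` at any `(a*, b*)` satisfying the moment-matching conditions
`ψ(a*) − log(b*) = L` and `a*/b* = M`. -/
theorem gamma_cross_entropy_min_moment_matching
    (p : Measure ℝ) [IsProbabilityMeasure p] (hsupp : p (Set.Iic 0) = 0)
    (L M : ℝ)
    (hLint : Integrable (fun x => Real.log x) p) (hL : L = ∫ x, Real.log x ∂p)
    (hMint : Integrable (fun x => x) p) (hM : M = ∫ x, x ∂p) (hMpos : 0 < M)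
    (C : ℝ → ℝ → ℝ)
    (hC : ∀ a b, C a b = -(a * Real.log b - Real.log (Real.Gamma a) + (a - 1) * L - b * M))
    (astar bstar : ℝ) (hastar : 0 < astar) (hbstar : 0 < bstar)
    (hmatch₁ : digamma astar - Real.log bstar = L) (hmatch₂ : astar / bstar = M) :
    ∀ a b : ℝ, 0 < a → 0 < b → C astar bstar ≤ C a b := by
  intro a b ha hb
  set u := a - astar with hu
  set v := b - bstar with hv
  set g : ℝ → ℝ := fun t =>
    Real.log (Real.Gamma (astar + t * u)) - (astar + t * u) * Real.log (bstar + t * v) with hg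
  -- derivative of g at 0
  have hGammadiff : DifferentiableAt ℝ (fun y => Real.log (Real.Gamma y)) astar := by
    refine (Real.differentiableAt_Gamma fun m => ?_).log (Real.Gamma_pos_of_pos hastar).ne'
    have : -(m:ℝ) ≤ 0 := neg_nonpos.mpr (Nat.cast_nonneg m)
    linarith
  have hψ : HasDerivAt (fun y => Real.log (Real.Gamma y)) (digamma astar) astar :=
    hGammadiff.hasDerivAt
  have haff : HasDerivAt (fun t : ℝ => astar + t * u) u 0 := by
    simpa using ((hasDerivAt_id (0:ℝ)).mul_const u).const_add astar
  have haff' : HasDerivAt (fun t : ℝ => bstar + t * v) v 0 := by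
    simpa using ((hasDerivAt_id (0:ℝ)).mul_const v).const_add bstar
  have h1 : HasDerivAt (fun t : ℝ => Real.log (Real.Gamma (astar + t * u)))
      (digamma astar * u) 0 := by
    have hψ2 : HasDerivAt (fun y => Real.log (Real.Gamma y)) (digamma astar)
        ((fun t : ℝ => astar + t * u) 0) := by simpa using hψ
    exact hψ2.comp 0 haff
  have hbne : bstar + 0 * v ≠ 0 := by simpa using hbstar.ne'
  have h2 : HasDerivAt (fun t : ℝ => Real.log (bstar + t * v)) (v / bstar) 0 := by
    have := haff'.log hbne
    simpa using this
  have h3 : HasDerivAt (fun t : ℝ => (astar + t * u) * Real.log (bstar + t * v))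
      (u * Real.log bstar + astar * (v / bstar)) 0 := by
    have := haff.mul h2
    simp only [zero_mul, add_zero] at this
    exact this
  have hg' : HasDerivAt g (digamma astar * u - (u * Real.log bstar + astar * (v / bstar))) 0 :=
    h1.sub h3
  -- the derivative equals u * L - v * M
  have hD : digamma astar * u - (u * Real.log bstar + astar * (v / bstar)) = u * L - v * M := by
    rw [← hmatch₁, ← hmatch₂]
    field_simp
    ring
  -- convexity inequality: slope bound
  have hslope : ∀ t : ℝ, 0 < t → t < 1 → (g t - g 0) / t ≤ g 1 - g 0 := by
    intro t ht0 ht1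
    have h1t : 0 < 1 - t := by linarith
    have hconv := gce_combo_le hastar hbstar ha hb ht0 ht1
    have e₀ : (1-t)*astar + t*a = astar + t * u := by rw [hu]; ring
    have e₁ : (1-t)*bstar + t*b = bstar + t * v := by rw [hv]; ring
    rw [e₀, e₁] at hconv
    have hg0 : g 0 = Real.log (Real.Gamma astar) - astar * Real.log bstar := by
      rw [hg]; norm_num
    have hg1 : g 1 = Real.log (Real.Gamma a) - a * Real.log b := by
      rw [hg, hu, hv]; norm_num
    have hgt : g t ≤ (1-t) * g 0 + t * g 1 := by
      rw [hg0, hg1]; exact hconv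
    rw [div_le_iff₀ ht0]
    nlinarith
  have hderiv_le : digamma astar * u - (u * Real.log bstar + astar * (v / bstar)) ≤ g 1 - g 0 := by
    have htend : Filter.Tendsto (slope g 0) (nhdsWithin 0 (Set.Ioi 0))
        (nhds (digamma astar * u - (u * Real.log bstar + astar * (v / bstar)))) :=
      (hasDerivAt_iff_tendsto_slope.mp hg').mono_left
        (nhdsWithin_mono 0 fun x hx => ne_of_gt hx)
    refine le_of_tendsto htend ?_
    filter_upwards [Ioo_mem_nhdsGT_of_mem (Set.left_mem_Ico.mpr one_pos)] with t ht
    have := hslope t ht.1 ht.2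
    simpa [slope_def_field, div_eq_inv_mul] using this
  rw [hD] at hderiv_le
  have hg0 : g 0 = Real.log (Real.Gamma astar) - astar * Real.log bstar := by
    rw [hg]; norm_num
  have hg1 : g 1 = Real.log (Real.Gamma a) - a * Real.log b := by
    rw [hg, hu, hv]; norm_num
  rw [hC a b, hC astar bstar]
  rw [hg0, hg1, hu, hv] at hderiv_le
  nlinarith [hderiv_le]
end
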